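/- Let (X, τ) be a topological space. Then the equality cl_τ(A) = ⋃_{x ∈ A} cl_τ({x}) holds for every nonempty subset A of X if and only if (X, τ) is an Alexandroff space. -/
import Mathlib


open Topology

def IsAlexandroff {X : Type*} (τ : TopologicalSpace X) : Prop :=
  ∀ S : Set (Set X), (∀ s ∈ S, IsOpen[τ] s) → IsOpen[τ] (⋂₀ S)

def IsQuasiMetric {X : Type*} (d : X → X → ℝ) : Prop :=
  (∀ x y, 0 ≤ d x y) ∧ (∀ x, d x x = 0) ∧
  (∀ x y z, d x y ≤ d x z + d z y) ∧
  (∀ x y, d x y = 0 → d y x = 0 → x = y)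

def ballTopology {X : Type*} (d : X → X → ℝ) : TopologicalSpace X :=
  TopologicalSpace.generateFrom {B | ∃ x r, 0 < r ∧ B = {y | d x y < r}}

def IsEquidistantQM {X : Type*} (d : X → X → ℝ) : Prop :=
  ∃ t > 0, ∀ x y, d x y ≠ 0 → d x y = t

def IsEquidistantMetric {X : Type*} (ρ : X → X → ℝ) : Prop :=
  (∀ x y, ρ x y = 0 ↔ x = y) ∧ (∀ x y, ρ x y = ρ y x) ∧
  (∀ x y z, ρ x z ≤ ρ x y + ρ y z) ∧
  ∃ t > 0, ∀ x y, x ≠ y → ρ x y = t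

theorem stmt1 {X : Type*} (τ : TopologicalSpace X) :
    (∀ A : Set X, A.Nonempty → @closure X τ A = ⋃ x ∈ A, @closure X τ {x}) ↔
      IsAlexandroff τ := by
  letI := τ
  constructor
  · intro h S hS
    rw [← isClosed_compl_iff, Set.compl_sInter, Set.sUnion_image]
    rcases (⋃ s ∈ S, sᶜ).eq_empty_or_nonempty with hC | hC
    · rw [hC]; exact isClosed_empty
    · rw [← closure_eq_iff_isClosed]
      apply subset_antisymm _ subset_closure
      rw [h _ hC]
      intro x hx
      simp only [Set.mem_iUnion] at hx ⊢
      obtain ⟨y, ⟨s, hs, hys⟩, hxy⟩ := hx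
      have hcl : IsClosed (sᶜ : Set X) := (hS s hs).isClosed_compl
      have hsub : closure {y} ⊆ sᶜ :=
        hcl.closure_subset_iff.mpr (Set.singleton_subset_iff.mpr hys)
      exact ⟨s, hs, hsub hxy⟩
  · intro h A hA
    apply subset_antisymm
    · apply closure_minimal
      · intro x hx
        exact Set.mem_iUnion₂.mpr ⟨x, hx, subset_closure rfl⟩
      · rw [← isOpen_compl_iff, Set.compl_iUnion₂]
        have := h ((fun x => (closure ({x} : Set X))ᶜ) '' A) ?_
        · rwa [Set.sInter_image] at this
        · rintro s ⟨x, _, rfl⟩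
          exact isClosed_closure.isOpen_compl
    · exact Set.iUnion₂_subset fun x hx =>
        closure_mono (Set.singleton_subset_iff.mpr hx)
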